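/- Let G be a finite group and a, b, c nontrivial elements of G. Then the product of conjugacy classes a^G · b^G equals the conjugacy class c^G if and only if χ(a)χ(b) = χ(c)χ(1) for all irreducible characters χ of G. -/

import Mathlib

open Pointwise CategoryTheory

/-- The conjugacy class of `a` in `G`. -/
def conjClass (G : Type*) [Group G] (a : G) : Set G := {b | IsConj a b}

noncomputable section AH

open MonoidAlgebra Representation Finset

variable {G : Type} [Group G] [Fintype G]

instance : Module.Finite ℂ (MonoidAlgebra ℂ G) :=
  Module.Finite.equiv ((Finsupp.linearEquivFunOnFinite ℂ ℂ G).symm.trans (MonoidAlgebra.coeffLinearEquiv ℂ).symm)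

/-- The conjugacy class of `d` as a `Finset`. -/
def cfin (d : G) : Finset G := (Set.toFinite (conjClass G d)).toFinset

lemma mem_cfin {d x : G} : x ∈ cfin d ↔ IsConj d x := by
  simp only [cfin, Set.Finite.mem_toFinset]; exact Iff.rfl

lemma cfin_nonempty (d : G) : (cfin d).Nonempty := ⟨d, mem_cfin.2 (IsConj.refl d)⟩

/-- The class sum in the monoid algebra. -/
def csum (D : Finset G) : MonoidAlgebra ℂ G := ∑ x ∈ D, MonoidAlgebra.single x 1

omit [Fintype G] in
lemma nontrivial_of_simple (V : FDRep ℂ G) [Simple V] : Nontrivial V := by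
  rcases subsingleton_or_nontrivial V with h | h
  · exfalso
    apply CategoryTheory.id_nonzero V
    letI : Subsingleton ((CategoryTheory.forget (FGModuleCat ℂ)).obj V.V) := h
    have : ((𝟙 V : V ⟶ V).hom.hom.hom : V →ₗ[ℂ] V) = ((0 : V ⟶ V).hom.hom.hom : V →ₗ[ℂ] V) := by
      ext v; exact Subsingleton.elim _ _
    exact Action.Hom.ext (FGModuleCat.hom_ext this)
  · exact h

omit [Fintype G] in
lemma char_one_ne_zero (V : FDRep ℂ G) [Simple V] : V.character 1 ≠ 0 := by
  have := nontrivial_of_simple V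
  rw [FDRep.char_one]
  exact_mod_cast (Module.finrank_pos (R := ℂ) (M := V)).ne'

omit [Fintype G] in
lemma schur_scalar (V : FDRep ℂ G) [Simple V] (f : V →ₗ[ℂ] V)
    (h : ∀ g : G, f.comp (V.ρ g) = (V.ρ g).comp f) :
    ∃ μ : ℂ, f = μ • LinearMap.id := by
  have h1 : Module.finrank ℂ (V ⟶ V) = 1 := by
    rw [FDRep.finrank_hom_simple_simple V V, if_pos ⟨Iso.refl V⟩]
  have h0 : (𝟙 V : V ⟶ V) ≠ 0 := CategoryTheory.id_nonzero V
  obtain ⟨c, hc⟩ := (finrank_eq_one_iff_of_nonzero' (𝟙 V) h0).mp h1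
    (⟨FGModuleCat.ofHom f, fun g => by ext v; exact LinearMap.congr_fun (h g) v⟩ : V ⟶ V)
  refine ⟨c, ?_⟩
  have := congrArg (fun φ : V ⟶ V => φ.hom.hom.hom) hc
  exact this.symm

omit [Fintype G] in
lemma asAlgebraHom_csum (V : FDRep ℂ G) (D : Finset G) :
    asAlgebraHom V.ρ (csum D) = ∑ x ∈ D, V.ρ x := by
  rw [csum, map_sum]
  exact Finset.sum_congr rfl fun x _ => by
    rw [Representation.asAlgebraHom_single, one_smul]

lemma classSum_scalar (V : FDRep ℂ G) [Simple V] (d : G) :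
    asAlgebraHom V.ρ (csum (cfin d)) =
      (((cfin d).card : ℂ) * V.character d / V.character 1) • LinearMap.id := by
  have hcomm : ∀ g : G, (∑ x ∈ cfin d, V.ρ x).comp (V.ρ g)
      = (V.ρ g).comp (∑ x ∈ cfin d, V.ρ x) := by
    intro g
    have : ∑ x ∈ cfin d, (V.ρ x) * (V.ρ g) = ∑ x ∈ cfin d, (V.ρ g) * (V.ρ x) := by
      refine Finset.sum_nbij' (fun x => g⁻¹ * x * g) (fun x => g * x * g⁻¹) ?_ ?_ ?_ ?_ ?_
      · intro x hx
        refine mem_cfin.2 ((mem_cfin.1 hx).trans ?_)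
        rw [isConj_comm]
        exact isConj_iff.2 ⟨g, by group⟩
      · intro x hx
        refine mem_cfin.2 ((mem_cfin.1 hx).trans ?_)
        exact isConj_iff.2 ⟨g, by group⟩
      · intro x _; group
      · intro x _; group
      · intro x _
        rw [← map_mul, ← map_mul]
        congr 1
        group
    rw [← Module.End.mul_eq_comp, ← Module.End.mul_eq_comp, Finset.sum_mul, Finset.mul_sum]
    exact this
  obtain ⟨μ, hμ⟩ := schur_scalar V (∑ x ∈ cfin d, V.ρ x) hcomm
  rw [asAlgebraHom_csum, hμ]
  congr 1
  have htr : LinearMap.trace ℂ V (∑ x ∈ cfin d, V.ρ x) = ((cfin d).card : ℂ) * V.character d := by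
    rw [map_sum]
    have : ∀ x ∈ cfin d, LinearMap.trace ℂ V (V.ρ x) = V.character d := by
      intro x hx
      obtain ⟨h, hh⟩ := isConj_iff.1 (mem_cfin.1 hx)
      have := FDRep.char_conj V d h
      rw [hh] at this
      exact this
    rw [Finset.sum_congr rfl this, Finset.sum_const, nsmul_eq_mul]
  have hfr : (Module.finrank ℂ V : ℂ) = V.character 1 := by rw [FDRep.char_one]
  rw [hμ, map_smul, LinearMap.trace_id, smul_eq_mul, hfr] at htr
  rw [eq_div_iff (char_one_ne_zero V)]
  exact htr

variable [DecidableEq G]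

def fib (a b g : G) : Finset (G × G) :=
  ((cfin a) ×ˢ (cfin b)).filter (fun p => p.1 * p.2 = g)

lemma fib_def (a b g : G) :
    fib a b g = ((cfin a) ×ˢ (cfin b)).filter (fun p => p.1 * p.2 = g) := rfl

lemma csum_mul_csum (a b : G) :
    csum (cfin a) * csum (cfin b)
      = ∑ p ∈ (cfin a) ×ˢ (cfin b), MonoidAlgebra.single (p.1 * p.2) (1 : ℂ) := by
  rw [csum, csum, Finset.sum_mul_sum, Finset.sum_product]
  exact Finset.sum_congr rfl fun x _ => Finset.sum_congr rfl fun y _ => by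
    rw [MonoidAlgebra.single_mul_single, one_mul]

lemma csum_apply (D : Finset G) (g : G) : (csum D).coeff g = if g ∈ D then 1 else 0 := by
  rw [csum, MonoidAlgebra.coeff_sum, Finsupp.finset_sum_apply]
  simp only [MonoidAlgebra.coeff_single, Finsupp.single_apply]
  rw [Finset.sum_ite_eq' D g (fun _ => (1 : ℂ))]

lemma prodCoeff (a b g : G) :
    (csum (cfin a) * csum (cfin b)).coeff g = ((fib a b g).card : ℂ) := by
  rw [csum_mul_csum, MonoidAlgebra.coeff_sum, Finsupp.finset_sum_apply]
  simp only [MonoidAlgebra.coeff_single, Finsupp.single_apply]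
  rw [Finset.sum_boole, fib_def]

lemma fib_conj (a b g h : G) : (fib a b (h * g * h⁻¹)).card = (fib a b g).card := by
  apply Finset.card_nbij' (fun p => (h⁻¹ * p.1 * h, h⁻¹ * p.2 * h))
    (fun p => (h * p.1 * h⁻¹, h * p.2 * h⁻¹))
  · rintro ⟨x, y⟩ hp
    simp only [fib, Finset.mem_coe, Finset.mem_filter, Finset.mem_product] at hp ⊢
    obtain ⟨⟨hx, hy⟩, hxy⟩ := hp
    refine ⟨⟨?_, ?_⟩, ?_⟩
    · exact mem_cfin.2 ((mem_cfin.1 hx).trans (isConj_iff.2 ⟨h⁻¹, by group⟩))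
    · exact mem_cfin.2 ((mem_cfin.1 hy).trans (isConj_iff.2 ⟨h⁻¹, by group⟩))
    · have : h⁻¹ * (x * y) * h = g := by rw [hxy]; group
      rw [← this]; group
  · rintro ⟨x, y⟩ hp
    simp only [fib, Finset.mem_coe, Finset.mem_filter, Finset.mem_product] at hp ⊢
    obtain ⟨⟨hx, hy⟩, hxy⟩ := hp
    refine ⟨⟨?_, ?_⟩, ?_⟩
    · exact mem_cfin.2 ((mem_cfin.1 hx).trans (isConj_iff.2 ⟨h, rfl⟩))
    · exact mem_cfin.2 ((mem_cfin.1 hy).trans (isConj_iff.2 ⟨h, rfl⟩))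
    · rw [← hxy]; group
  · rintro ⟨x, y⟩ _; simp only [Prod.mk.injEq]; constructor <;> group
  · rintro ⟨x, y⟩ _; simp only [Prod.mk.injEq]; constructor <;> group

lemma fib_const {a b c g : G} (hg : g ∈ cfin c) : (fib a b g).card = (fib a b c).card := by
  obtain ⟨h, hh⟩ := isConj_iff.1 (mem_cfin.1 hg)
  rw [← hh, fib_conj]

lemma forward_alg {a b c : G} (h : conjClass G a * conjClass G b = conjClass G c) :
    csum (cfin a) * csum (cfin b)
      = ((((cfin a).card : ℂ) * ((cfin b).card : ℂ)) / ((cfin c).card : ℂ)) • csum (cfin c) := by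
  have hmaps : ∀ p ∈ (cfin a) ×ˢ (cfin b), p.1 * p.2 ∈ cfin c := by
    rintro ⟨x, y⟩ hp
    rw [Finset.mem_product] at hp
    have : x * y ∈ conjClass G a * conjClass G b :=
      Set.mul_mem_mul (mem_cfin.1 hp.1) (mem_cfin.1 hp.2)
    rw [h] at this
    exact mem_cfin.2 this
  have htot : ∑ g ∈ cfin c, (fib a b g).card = (cfin a).card * (cfin b).card := by
    rw [← Finset.card_product]
    exact (Finset.card_eq_sum_card_fiberwise hmaps).symm
  have hconst : ∑ g ∈ cfin c, (fib a b g).card = (fib a b c).card * (cfin c).card := by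
    rw [Finset.sum_congr rfl (fun g hg => fib_const hg), Finset.sum_const, smul_eq_mul, mul_comm]
  have hC0 : ((cfin c).card : ℂ) ≠ 0 := by
    exact_mod_cast (Finset.card_pos.2 (cfin_nonempty c)).ne'
  have hm : ((fib a b c).card : ℂ)
      = (((cfin a).card : ℂ) * ((cfin b).card : ℂ)) / ((cfin c).card : ℂ) := by
    rw [eq_div_iff hC0]
    exact_mod_cast hconst.symm.trans htot
  rw [← hm, csum_mul_csum,
    ← Finset.sum_fiberwise_of_maps_to hmaps (fun p => MonoidAlgebra.single (p.1 * p.2) (1 : ℂ)),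
    csum, Finset.smul_sum]
  refine Finset.sum_congr rfl fun g hg => ?_
  have he : ∀ p ∈ ((cfin a) ×ˢ (cfin b)).filter (fun p => p.1 * p.2 = g),
      MonoidAlgebra.single (p.1 * p.2) (1 : ℂ) = MonoidAlgebra.single g 1 := by
    intro p hp
    rw [(Finset.mem_filter.1 hp).2]
  rw [Finset.sum_congr rfl he, Finset.sum_const, ← Nat.cast_smul_eq_nsmul ℂ, ← fib_def,
    fib_const hg]

lemma backward_sets {a b c : G} {m : ℂ} (hm : m ≠ 0)
    (h : csum (cfin a) * csum (cfin b) = m • csum (cfin c)) :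
    conjClass G a * conjClass G b = conjClass G c := by
  ext g
  have h2 : (csum (cfin a) * csum (cfin b)).coeff g = (m • csum (cfin c)).coeff g := by rw [h]
  rw [prodCoeff, MonoidAlgebra.coeff_smul_apply, csum_apply, smul_eq_mul] at h2
  have hmem : g ∈ conjClass G a * conjClass G b ↔ (fib a b g).card ≠ 0 := by
    rw [Set.mem_mul]
    constructor
    · rintro ⟨x, hx, y, hy, hxy⟩
      refine Finset.card_ne_zero_of_mem (a := (x, y)) ?_
      simp only [fib, Finset.mem_filter, Finset.mem_product]
      exact ⟨⟨mem_cfin.2 hx, mem_cfin.2 hy⟩, hxy⟩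
    · intro hne
      obtain ⟨⟨x, y⟩, hp⟩ := Finset.card_pos.1 (Nat.pos_of_ne_zero hne)
      simp only [fib, Finset.mem_filter, Finset.mem_product] at hp
      exact ⟨x, mem_cfin.1 hp.1.1, y, mem_cfin.1 hp.1.2, hp.2⟩
  by_cases hg : g ∈ cfin c
  · refine iff_of_true ?_ (mem_cfin.1 hg)
    rw [hmem]
    intro h0
    rw [h0, if_pos hg, mul_one] at h2
    exact hm (by exact_mod_cast h2.symm)
  · refine iff_of_false (fun hin => ?_) (fun hgc => hg (mem_cfin.2 hgc))
    rw [if_neg hg, mul_zero] at h2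
    exact (hmem.1 hin) (by exact_mod_cast h2)

/-- Pointwise commutation for a morphism of representations. -/
lemma hom_comm_apply {Y X : FDRep ℂ G} (f : Y ⟶ X) (g : G) (v : Y) :
    f.hom (Y.ρ g v) = X.ρ g (f.hom v) :=
  LinearMap.congr_fun (congrArg (fun φ => φ.hom.hom) (f.comm g)) v

lemma hom_asAlgebraHom {Y X : FDRep ℂ G} (f : Y ⟶ X) (r : MonoidAlgebra ℂ G) (y : Y) :
    f.hom (asAlgebraHom Y.ρ r y) = asAlgebraHom X.ρ r (f.hom y) := by
  induction r using MonoidAlgebra.induction_linear with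
  | zero => simp
  | add p q hp hq => simp [map_add, hp, hq]
  | single g c =>
      rw [Representation.asAlgebraHom_single, Representation.asAlgebraHom_single,
        LinearMap.smul_apply, LinearMap.smul_apply, map_smul, hom_comm_apply]

/-- A mono in `FDRep` has injective underlying map. -/
lemma injective_of_mono {Y X : FDRep ℂ G} (f : Y ⟶ X) [Mono f] :
    Function.Injective (f.hom.hom.hom : Y →ₗ[ℂ] X) := by
  rw [← LinearMap.ker_eq_bot]
  set K := LinearMap.ker (f.hom.hom.hom : Y →ₗ[ℂ] X) with hKdef
  have hK : ∀ g : G, ∀ v ∈ K, Y.ρ g v ∈ K := by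
    intro g v hv
    have h' : f.hom.hom.hom ((Y.ρ g) v) = (X.ρ g) (f.hom.hom.hom v) :=
        LinearMap.congr_fun (congrArg (fun φ => φ.hom.hom) (f.comm g)) v
    exact LinearMap.mem_ker.2
      (h'.trans ((congrArg (X.ρ g) (LinearMap.mem_ker.1 hv)).trans (map_zero _)))
  let ρK : Representation ℂ G K :=
    { toFun := fun g => (Y.ρ g).restrict (hK g)
      map_one' := by
        apply LinearMap.ext; intro v; apply Subtype.ext
        show (Y.ρ 1) v.1 = v.1
        rw [map_one]; rfl
      map_mul' := fun g h => by
        apply LinearMap.ext; intro v; apply Subtype.ext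
        show (Y.ρ (g * h)) v.1 = (Y.ρ g) ((Y.ρ h) v.1)
        rw [map_mul]; rfl }
  let ι : FDRep.of ρK ⟶ Y := ⟨FGModuleCat.ofHom K.subtype, fun g => by ext v; rfl⟩
  have h1 : ι ≫ f = (0 : FDRep.of ρK ⟶ X) := by
    apply Action.Hom.ext
    apply FGModuleCat.hom_ext
    apply LinearMap.ext
    intro v
    exact LinearMap.mem_ker.1 v.2
  have h2 : (0 : FDRep.of ρK ⟶ Y) ≫ f = (0 : FDRep.of ρK ⟶ X) := by simp
  have h3 : ι = 0 := by
    have := h1.trans h2.symm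
    exact (cancel_mono f).1 this
  rw [eq_bot_iff]
  intro v hv
  have h4 := congrArg (fun φ : FDRep.of ρK ⟶ Y => φ.hom.hom.hom) h3
  have hv0 : v = 0 := by
    have h5 := LinearMap.congr_fun h4 ⟨v, hv⟩
    exact h5
  simp [Submodule.mem_bot, hv0]

section VS
variable (S : Submodule (MonoidAlgebra ℂ G) (MonoidAlgebra ℂ G))

/-- The representation of `G` on a submodule of the regular module. -/
def repS : Representation ℂ G (S.restrictScalars ℂ) where
  toFun g := {
    toFun := fun x => ⟨MonoidAlgebra.single g 1 * (x : MonoidAlgebra ℂ G),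
      S.smul_mem (MonoidAlgebra.single g 1) x.2⟩
    map_add' := fun x y => by ext; simp [mul_add]
    map_smul' := fun r x => by ext; simp [Algebra.mul_smul_comm] }
  map_one' := by ext x; simp [MonoidAlgebra.one_def]
  map_mul' g h := by
    ext x
    simp [MonoidAlgebra.single_mul_single, mul_assoc]

/-- The `FDRep` attached to a submodule of the regular module. -/
def VS : FDRep ℂ G := FDRep.of (repS S)

theorem asAlgebraHom_repS (r : MonoidAlgebra ℂ G) (x : S.restrictScalars ℂ) :
    ((Representation.asAlgebraHom (repS S) r x : S.restrictScalars ℂ) : MonoidAlgebra ℂ G)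
      = r * (x : MonoidAlgebra ℂ G) := by
  induction r using MonoidAlgebra.induction_linear with
  | zero => simp
  | add f g hf hg => simp [map_add, add_mul, hf, hg]
  | single g c =>
      rw [Representation.asAlgebraHom_single]
      show ((c • (repS S g x) : S.restrictScalars ℂ) : MonoidAlgebra ℂ G) = _
      rw [Submodule.coe_smul]
      show c • (MonoidAlgebra.single g 1 * (x : MonoidAlgebra ℂ G)) = _
      rw [← smul_mul_assoc, MonoidAlgebra.smul_single, smul_eq_mul, mul_one]

theorem simple_VS (hS : IsSimpleModule (MonoidAlgebra ℂ G) S) : Simple (VS S) := by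
  haveI hso : IsSimpleOrder (Submodule (MonoidAlgebra ℂ G) S) := hS.toIsSimpleOrder
  constructor
  intro Y f hm
  let fh : Y →ₗ[ℂ] (S.restrictScalars ℂ) := f.hom.hom.hom
  constructor
  · intro hiso h0
    obtain ⟨x, hx, hxne⟩ : ∃ x : MonoidAlgebra ℂ G, x ∈ S ∧ x ≠ 0 := by
      by_contra hall
      push_neg at hall
      have : (⊥ : Submodule (MonoidAlgebra ℂ G) S) = ⊤ := by
        rw [eq_top_iff]
        rintro ⟨y, hy⟩ _
        simp only [Submodule.mem_bot]
        exact Subtype.ext (hall y hy)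
      exact absurd this bot_ne_top
    let s : S.restrictScalars ℂ := ⟨x, hx⟩
    haveI := hiso
    have hzero : ∀ w : Y, fh w = 0 := fun w => by show f.hom.hom.hom w = 0; rw [h0]; rfl
    have hsurj : fh ((CategoryTheory.inv f).hom.hom.hom s) = s := by
      have h4 := congrArg (fun φ : VS S ⟶ VS S => φ.hom.hom.hom) (IsIso.inv_hom_id f)
      exact LinearMap.congr_fun h4 s
    have hs0 : s = (0 : S.restrictScalars ℂ) := hsurj.symm.trans (hzero _)
    exact hxne (congrArg Subtype.val hs0)
  · intro hne
    have hinj : Function.Injective fh := injective_of_mono f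
    let R' : Submodule (MonoidAlgebra ℂ G) S :=
      { carrier := {x : S | ∃ y : Y,
          ((fh y : S.restrictScalars ℂ) : MonoidAlgebra ℂ G) = (x : MonoidAlgebra ℂ G)}
        add_mem' := by
          rintro x₁ x₂ ⟨y₁, h₁⟩ ⟨y₂, h₂⟩
          refine ⟨y₁ + y₂, ?_⟩
          rw [map_add fh y₁ y₂, Submodule.coe_add, h₁, h₂]
          rfl
        zero_mem' := by
          exact ⟨0, by rw [map_zero fh]; rfl⟩
        smul_mem' := by
          rintro r x ⟨y, hy⟩
          refine ⟨Representation.asAlgebraHom Y.ρ r y, ?_⟩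
          have h5 : fh (Representation.asAlgebraHom Y.ρ r y)
              = Representation.asAlgebraHom (repS S) r (fh y) := hom_asAlgebraHom f r y
          rw [h5, asAlgebraHom_repS S r (fh y), hy]
          rfl }
    have hR : R' = ⊤ := by
      rcases hso.2 R' with h | h
      · exfalso
        obtain ⟨y, hy⟩ : ∃ y : Y, fh y ≠ 0 := by
          by_contra hall
          push_neg at hall
          apply hne
          apply Action.Hom.ext
          apply FGModuleCat.hom_ext
          exact LinearMap.ext fun y => hall y
        have hmem : (⟨((fh y : S.restrictScalars ℂ) : MonoidAlgebra ℂ G),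
            (fh y).2⟩ : S) ∈ R' := ⟨y, rfl⟩
        rw [h, Submodule.mem_bot] at hmem
        apply hy
        apply Subtype.ext
        exact congrArg Subtype.val hmem
      · exact h
    have hsurj : Function.Surjective fh := by
      intro x
      have hx : (⟨(x : MonoidAlgebra ℂ G), x.2⟩ : S) ∈ R' := hR ▸ Submodule.mem_top
      obtain ⟨y, hy⟩ := hx
      exact ⟨y, Subtype.ext hy⟩
    let e := LinearEquiv.ofBijective fh ⟨hinj, hsurj⟩
    let ginv : VS S ⟶ Y := ⟨FGModuleCat.ofHom e.symm.toLinearMap, fun g₀ => by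
      apply FGModuleCat.hom_ext
      apply LinearMap.ext
      intro v
      apply hinj
      show fh (e.symm ((VS S).ρ g₀ v)) = fh (Y.ρ g₀ (e.symm v))
      have h6 : ∀ w, fh (e.symm w) = w := fun w => e.apply_symm_apply w
      refine (h6 _).trans ?_
      have h7 : fh (Y.ρ g₀ (e.symm v)) = (VS S).ρ g₀ (fh (e.symm v)) :=
        LinearMap.congr_fun (congrArg (fun φ => φ.hom.hom) (f.comm g₀)) (e.symm v)
      rw [h7]; exact congrArg _ (h6 v).symm⟩
    refine ⟨⟨ginv, ?_, ?_⟩⟩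
    · apply Action.Hom.ext
      apply FGModuleCat.hom_ext
      apply LinearMap.ext
      intro v
      exact e.symm_apply_apply v
    · apply Action.Hom.ext
      apply FGModuleCat.hom_ext
      apply LinearMap.ext
      intro v
      exact e.apply_symm_apply v
end VS


lemma smul_id_eq (V : FDRep ℂ G) [Simple V] {μ ν : ℂ}
    (h : μ • (LinearMap.id : V →ₗ[ℂ] V) = ν • LinearMap.id) : μ = ν := by
  have := nontrivial_of_simple V
  obtain ⟨v, hv⟩ := exists_ne (0 : V)
  have h2 := LinearMap.congr_fun h v
  simp only [LinearMap.smul_apply, LinearMap.id_apply] at h2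
  rcases smul_eq_zero.1 (show (μ - ν) • v = 0 by rw [sub_smul, h2, sub_self]) with h3 | h3
  · exact sub_eq_zero.1 h3
  · exact absurd h3 hv

lemma smul_id_mul (V : FDRep ℂ G) (μ ν : ℂ) :
    (μ • (LinearMap.id : V →ₗ[ℂ] V)) * (ν • LinearMap.id) = (μ * ν) • LinearMap.id := by
  rw [smul_mul_smul_comm]
  congr 1

lemma scalar_identity (χa χb χc χ1 A B C : ℂ) (h1 : χ1 ≠ 0) (hC : C ≠ 0) (hA : A ≠ 0)
    (hB : B ≠ 0) :
    (A * χa / χ1) * (B * χb / χ1) = (A * B / C) * (C * χc / χ1) ↔ χa * χb = χc * χ1 := by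
  constructor
  · intro h
    field_simp at h
    refine mul_left_cancel₀ (b := χa * χb) (c := χc * χ1)
      (mul_ne_zero (mul_ne_zero hA hB) (mul_ne_zero hC h1)) ?_
    linear_combination (A * B * C * χ1) * h
  · intro h
    field_simp
    linear_combination h

lemma mul_eq_zero_of_killed (z : MonoidAlgebra ℂ G)
    (hz : ∀ S : Submodule (MonoidAlgebra ℂ G) (MonoidAlgebra ℂ G),
      IsSimpleModule (MonoidAlgebra ℂ G) S → ∀ s ∈ S, z * s = 0) :
    z = 0 := by
  have htop := IsSemisimpleModule.sSup_simples_eq_top (MonoidAlgebra ℂ G) (MonoidAlgebra ℂ G)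
  have h1 : (1 : MonoidAlgebra ℂ G) ∈ (⊤ : Submodule (MonoidAlgebra ℂ G) (MonoidAlgebra ℂ G)) :=
    Submodule.mem_top
  rw [← htop, sSup_eq_iSup'] at h1
  have hz1 : z * 1 = 0 := by
    refine Submodule.iSup_induction (motive := fun m => z * m = 0) _ h1 ?_ (mul_zero z) ?_
    · rintro ⟨S, hS⟩ x hx
      exact hz S hS x hx
    · intro x y hx hy
      rw [mul_add, hx, hy, add_zero]
  rwa [mul_one] at hz1

end AH

theorem stmt0 {G : Type} [Group G] [Fintype G] (a b c : G)
    (ha : a ≠ 1) (hb : b ≠ 1) (hc : c ≠ 1) :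
    conjClass G a * conjClass G b = conjClass G c ↔
      ∀ (V : FDRep ℂ G), Simple V →
        V.character a * V.character b = V.character c * V.character 1 := by
  classical
  have hA0 : ((cfin a).card : ℂ) ≠ 0 :=
    Nat.cast_ne_zero.2 (Finset.card_pos.2 (cfin_nonempty a)).ne'
  have hB0 : ((cfin b).card : ℂ) ≠ 0 :=
    Nat.cast_ne_zero.2 (Finset.card_pos.2 (cfin_nonempty b)).ne'
  have hC0 : ((cfin c).card : ℂ) ≠ 0 :=
    Nat.cast_ne_zero.2 (Finset.card_pos.2 (cfin_nonempty c)).ne'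
  constructor
  · intro h V hV
    haveI := hV
    have halg := forward_alg (a := a) (b := b) (c := c) h
    have h9 := congrArg (Representation.asAlgebraHom V.ρ) halg
    rw [map_mul, map_smul, classSum_scalar V a, classSum_scalar V b, classSum_scalar V c,
      smul_id_mul, smul_smul] at h9
    have h10 := smul_id_eq V h9
    exact (scalar_identity (V.character a) (V.character b) (V.character c) (V.character 1)
      _ _ _ (char_one_ne_zero V) hC0 hA0 hB0).1 h10
  · intro hχ
    have hm0 : (((cfin a).card : ℂ) * ((cfin b).card : ℂ)) / ((cfin c).card : ℂ) ≠ 0 :=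
      div_ne_zero (mul_ne_zero hA0 hB0) hC0
    apply backward_sets hm0
    rw [← sub_eq_zero]
    apply mul_eq_zero_of_killed
    intro S hS s hs
    haveI := simple_VS S hS
    have h8 : Representation.asAlgebraHom (VS S).ρ
        (csum (cfin a) * csum (cfin b)
          - ((((cfin a).card : ℂ) * ((cfin b).card : ℂ)) / ((cfin c).card : ℂ))
            • csum (cfin c)) = 0 := by
      rw [map_sub, map_mul, map_smul, classSum_scalar (VS S) a, classSum_scalar (VS S) b,
        classSum_scalar (VS S) c, smul_id_mul, smul_smul, sub_eq_zero]
      congr 1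
      exact (scalar_identity ((VS S).character a) ((VS S).character b) ((VS S).character c)
        ((VS S).character 1) _ _ _ (char_one_ne_zero (VS S)) hC0 hA0 hB0).2
        (hχ (VS S) inferInstance)
    have hz := asAlgebraHom_repS S
      (csum (cfin a) * csum (cfin b)
        - ((((cfin a).card : ℂ) * ((cfin b).card : ℂ)) / ((cfin c).card : ℂ))
          • csum (cfin c)) ⟨s, hs⟩
    have h8' : Representation.asAlgebraHom (repS S)
        (csum (cfin a) * csum (cfin b)
          - ((((cfin a).card : ℂ) * ((cfin b).card : ℂ)) / ((cfin c).card : ℂ))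
            • csum (cfin c)) = 0 := h8
    rw [h8'] at hz
    simpa using hz.symm
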